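/- Fix 0 < β < 1 and define f(z) = 1/(C_β · exp((1+iz)^β)) with C_β = 2π e^{-2^β}, where the power w^β uses the principal branch. Then f is analytic on the open lower half plane {z : Im z < 0}, and for every α > 0 there is a constant C such that |z|^α · |f(z)| ≤ C for all z with Im z ≤ 0. -/

import Mathlib

open Complex

private lemma aux_pow_exp {c : ℝ} (hc : 0 < c) (n : ℕ) {u : ℝ} (hu : 0 ≤ u) :
    u ^ n * Real.exp (-(c * u)) ≤ (n.factorial : ℝ) / c ^ n := by
  have h : (c * u) ^ n / (n.factorial : ℝ) ≤ Real.exp (c * u) :=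
    Real.pow_div_factorial_le_exp (x := c * u) (mul_nonneg hc.le hu) n
  have hfac : (0 : ℝ) < (n.factorial : ℝ) := by positivity
  have h2 : (c * u) ^ n ≤ (n.factorial : ℝ) * Real.exp (c * u) := by
    rw [div_le_iff₀ hfac] at h; linarith
  rw [le_div_iff₀ (by positivity)]
  rw [Real.exp_neg]
  have hexp : (0 : ℝ) < Real.exp (c * u) := Real.exp_pos _
  calc u ^ n * (Real.exp (c * u))⁻¹ * c ^ n
      = (c * u) ^ n * (Real.exp (c * u))⁻¹ := by rw [mul_pow]; ring
    _ ≤ ((n.factorial : ℝ) * Real.exp (c * u)) * (Real.exp (c * u))⁻¹ := by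
        exact mul_le_mul_of_nonneg_right h2 (by positivity)
    _ = (n.factorial : ℝ) := by field_simp

/-- The improved LCHS kernel `f(z) = 1/(C_β exp((1+iz)^β))` is analytic on the open lower
half plane and decays faster than any inverse power of `|z|` on the closed lower half plane. -/
theorem stmt6 (β : ℝ) (hβ0 : 0 < β) (hβ1 : β < 1) :
    let C : ℝ := 2 * Real.pi * Real.exp (-(2 : ℝ) ^ β)
    let f : ℂ → ℂ := fun z => 1 / ((C : ℂ) * Complex.exp ((1 + Complex.I * z) ^ (β : ℂ)))
    DifferentiableOn ℂ f {z : ℂ | z.im < 0} ∧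
      ∀ α : ℝ, 0 < α → ∃ C' : ℝ, ∀ z : ℂ, z.im ≤ 0 → ‖z‖ ^ α * ‖f z‖ ≤ C' := by
  intro C f
  have hπ := Real.pi_pos
  have hC : 0 < C := by positivity
  have hCne : (C : ℂ) ≠ 0 := by exact_mod_cast hC.ne'
  -- real part of 1 + I z
  have hre : ∀ z : ℂ, (1 + Complex.I * z).re = 1 - z.im := by
    intro z; simp [Complex.add_re, Complex.mul_re]; ring
  constructor
  · intro z hz
    apply DifferentiableAt.differentiableWithinAt
    apply DifferentiableAt.div (differentiableAt_const 1)
    · apply DifferentiableAt.mul (differentiableAt_const _)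
      apply DifferentiableAt.cexp
      apply DifferentiableAt.cpow _ (differentiableAt_const _)
      · exact Or.inl (by rw [hre]; simp only [Set.mem_setOf_eq] at hz; linarith)
      · fun_prop
    · exact mul_ne_zero hCne (Complex.exp_ne_zero _)
  · intro α hα
    set c : ℝ := Real.cos (β * (Real.pi / 2)) with hc
    have hcpos : 0 < c :=
      Real.cos_pos_of_mem_Ioo ⟨by nlinarith, by nlinarith⟩
    set n : ℕ := ⌈α / β⌉₊ with hn
    refine ⟨(2 : ℝ) ^ α * ((n.factorial : ℝ) / c ^ n) / C, ?_⟩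
    intro z hz
    set w : ℂ := 1 + Complex.I * z with hw
    have hw1 : 1 ≤ w.re := by rw [hw, hre]; linarith
    have hwne : w ≠ 0 := fun h => by simp [h] at hw1; linarith
    have habs : 1 ≤ ‖w‖ := hw1.trans ((abs_le.mp (Complex.abs_re_le_norm w)).2)
    have harg : |Complex.arg w| < Real.pi / 2 :=
      Complex.abs_arg_lt_pi_div_two_iff.mpr (Or.inl (by linarith))
    -- real part of w ^ β
    have hrepow : (w ^ (β : ℂ)).re = ‖w‖ ^ β * Real.cos (β * Complex.arg w) := by
      rw [Complex.cpow_def_of_ne_zero hwne, Complex.exp_re]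
      have h1 : (Complex.log w * (β : ℂ)).re = Real.log (‖w‖) * β := by
        simp [Complex.mul_re, Complex.log_re]
      have h2 : (Complex.log w * (β : ℂ)).im = Complex.arg w * β := by
        simp [Complex.mul_im, Complex.log_im]
      rw [h1, h2, ← Real.rpow_def_of_pos (by linarith : (0:ℝ) < ‖w‖),
        mul_comm (Complex.arg w) β]
    -- cosine lower bound
    have hcos : c ≤ Real.cos (β * Complex.arg w) := by
      rw [← Real.cos_abs (β * Complex.arg w)]
      apply Real.cos_le_cos_of_nonneg_of_le_pi (abs_nonneg _) (by nlinarith)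
      rw [abs_mul, abs_of_pos hβ0]
      have := harg.le
      nlinarith [abs_nonneg (Complex.arg w)]
    have hupos : (0 : ℝ) ≤ ‖w‖ ^ β := Real.rpow_nonneg (by positivity) _
    have hrelb : c * ‖w‖ ^ β ≤ (w ^ (β : ℂ)).re := by
      rw [hrepow, mul_comm]
      exact mul_le_mul_of_nonneg_left hcos hupos
    -- norm of f
    have hnormf : ‖f z‖ = 1 / (C * Real.exp ((w ^ (β : ℂ)).re)) := by
      simp only [f, ← hw, norm_div, norm_mul, norm_one,
        Complex.norm_exp, Complex.norm_real, Real.norm_eq_abs, abs_of_pos hC]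
    have hfb : ‖f z‖ ≤ Real.exp (-(c * ‖w‖ ^ β)) / C := by
      rw [hnormf, div_le_div_iff₀ (by positivity) hC]
      have h1 : (1:ℝ) ≤ Real.exp (-(c * ‖w‖ ^ β)) * Real.exp ((w ^ (β:ℂ)).re) := by
        rw [← Real.exp_add]
        calc (1:ℝ) = Real.exp 0 := Real.exp_zero.symm
          _ ≤ _ := Real.exp_le_exp.mpr (by linarith)
      nlinarith [mul_le_mul_of_nonneg_left h1 hC.le]
    -- norm of z bounded by 2 |w|
    have hzw : ‖z‖ ≤ 2 * ‖w‖ := by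
      have h1 : ‖z‖ = ‖w - 1‖ := by
        rw [show w - 1 = Complex.I * z by rw [hw]; ring]
        simp
      have h2 : ‖w - 1‖ ≤ ‖w‖ + 1 := by
        simpa using norm_sub_le w (1 : ℂ)
      rw [h1]
      linarith
    -- exponent bound
    have hαn : α ≤ β * n := by
      calc α = α / β * β := by field_simp
          _ ≤ (n : ℝ) * β := by
              apply mul_le_mul_of_nonneg_right (Nat.le_ceil _) hβ0.le
          _ = β * n := mul_comm _ _
    have hwa : ‖w‖ ^ α ≤ (‖w‖ ^ β) ^ n := by
      calc ‖w‖ ^ α ≤ ‖w‖ ^ (β * (n : ℝ)) :=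
            Real.rpow_le_rpow_of_exponent_le habs hαn
        _ = (‖w‖ ^ β) ^ (n : ℝ) := Real.rpow_mul (by positivity) _ _
        _ = (‖w‖ ^ β) ^ n := Real.rpow_natCast _ _
    -- assemble
    have hz2 : ‖z‖ ^ α ≤ 2 ^ α * (‖w‖ ^ β) ^ n := by
      calc ‖z‖ ^ α ≤ (2 * ‖w‖) ^ α :=
            Real.rpow_le_rpow (norm_nonneg _) hzw hα.le
        _ = 2 ^ α * ‖w‖ ^ α :=
            Real.mul_rpow (by norm_num) (by positivity)
        _ ≤ 2 ^ α * (‖w‖ ^ β) ^ n := by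
            exact mul_le_mul_of_nonneg_left hwa (by positivity)
    calc ‖z‖ ^ α * ‖f z‖
        ≤ (2 ^ α * (‖w‖ ^ β) ^ n) * (Real.exp (-(c * ‖w‖ ^ β)) / C) := by
          apply mul_le_mul hz2 hfb (norm_nonneg _)
          positivity
      _ = 2 ^ α * ((‖w‖ ^ β) ^ n * Real.exp (-(c * ‖w‖ ^ β))) / C := by
          ring
      _ ≤ 2 ^ α * ((n.factorial : ℝ) / c ^ n) / C := by
          gcongr
          exact aux_pow_exp hcpos n hupos
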